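/- Consider the 5×5 matrix B = [[1,0,0,-p,0],[-q,1,0,-r,0],[-s,-m,1,-n,0],[-w,0,0,1,-σ],[-v,0,0,-k,1]] with all parameters p,q,r,s,m,n,w,σ,v,k ≥ 0. If σk + σvp + pw < 1, then all leading principal minors of B are positive. -/

import Mathlib

open Matrix

/-- The `k`-th leading principal minor of a square matrix: the determinant of its
top-left `k × k` submatrix. -/
noncomputable def leadingMinor {n : ℕ} (B : Matrix (Fin n) (Fin n) ℝ) (k : ℕ)
    (hk : k ≤ n) : ℝ :=
  (B.submatrix (fun i : Fin k => Fin.castLE hk i) (fun j : Fin k => Fin.castLE hk j)).det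

theorem stmt13 (p q r s m n w σ v k : ℝ)
    (hp : 0 ≤ p) (hq : 0 ≤ q) (hr : 0 ≤ r) (hs : 0 ≤ s) (hm : 0 ≤ m)
    (hn : 0 ≤ n) (hw : 0 ≤ w) (hσ : 0 ≤ σ) (hv : 0 ≤ v) (hk : 0 ≤ k)
    (hcond : σ * k + σ * v * p + p * w < 1) :
    ∀ j : ℕ, ∀ hj : j ≤ 5, 0 < j →
      0 < leadingMinor
        (!![1, 0, 0, -p, 0;
            -q, 1, 0, -r, 0;
            -s, -m, 1, -n, 0;
            -w, 0, 0, 1, -σ;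
            -v, 0, 0, -k, 1]) j hj := by
  intro j hj hj0
  interval_cases j <;>
    simp +decide [leadingMinor, Matrix.det_succ_row_zero, Fin.sum_univ_succ, Fin.succAbove, Fin.castLE] <;>
    nlinarith [mul_nonneg hσ hk, mul_nonneg (mul_nonneg hσ hv) hp, mul_nonneg hp hw]
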